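/- Let r₀, r₁, r₂ ≥ 0 be real numbers. Define d = cosh(2r₁)cosh(2r₂) + 1 + cosh(2r₀)(cosh(2r₁) + cosh(2r₂)), a = [cosh(2r₀)(cosh(2r₁)cosh(2r₂)+1) + cosh(2r₁) + cosh(2r₂)]/d, and c = sinh(2r₀)sinh(2r₁)sinh(2r₂)/d. Then c² = a² - 1, and (a-1)/(a+1) = tanh²r₀ · tanh²r₁ · tanh²r₂; in particular √((a-1)/(a+1)) = tanh r₀ tanh r₁ tanh r₂. -/
import Mathlib


/-- Covariance-matrix entries of the post-measurement state in general continuous-variable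
entanglement swapping with a GPOVM whose seed is a two-mode squeezed vacuum state of
squeezing `r₀`, applied to two squeezed vacuum states with squeezing `r₁`, `r₂`:
with `d`, `a`, `c` as below, one has `c² = a² - 1` and
`(a-1)/(a+1) = tanh²r₀ · tanh²r₁ · tanh²r₂`; in particular
`√((a-1)/(a+1)) = tanh r₀ · tanh r₁ · tanh r₂`. -/
theorem stmt_8 (r₀ r₁ r₂ d a c : ℝ) (h0 : 0 ≤ r₀) (h1 : 0 ≤ r₁) (h2 : 0 ≤ r₂)
    (hd : d = Real.cosh (2 * r₁) * Real.cosh (2 * r₂) + 1 +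
      Real.cosh (2 * r₀) * (Real.cosh (2 * r₁) + Real.cosh (2 * r₂)))
    (ha : a = (Real.cosh (2 * r₀) * (Real.cosh (2 * r₁) * Real.cosh (2 * r₂) + 1) +
      Real.cosh (2 * r₁) + Real.cosh (2 * r₂)) / d)
    (hc : c = Real.sinh (2 * r₀) * Real.sinh (2 * r₁) * Real.sinh (2 * r₂) / d) :
    c ^ 2 = a ^ 2 - 1 ∧
      (a - 1) / (a + 1) =
        (Real.tanh r₀) ^ 2 * (Real.tanh r₁) ^ 2 * (Real.tanh r₂) ^ 2 ∧
      Real.sqrt ((a - 1) / (a + 1)) = Real.tanh r₀ * Real.tanh r₁ * Real.tanh r₂ := by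
  set s₀ := Real.sinh r₀ with hs0
  set s₁ := Real.sinh r₁ with hs1
  set s₂ := Real.sinh r₂ with hs2
  set k₀ := Real.cosh r₀ with hk0
  set k₁ := Real.cosh r₁ with hk1
  set k₂ := Real.cosh r₂ with hk2
  have c0 : 0 < k₀ := Real.cosh_pos r₀
  have c1 : 0 < k₁ := Real.cosh_pos r₁
  have c2 : 0 < k₂ := Real.cosh_pos r₂
  have e0 : k₀ ^ 2 - s₀ ^ 2 = 1 := Real.cosh_sq_sub_sinh_sq r₀
  have e1 : k₁ ^ 2 - s₁ ^ 2 = 1 := Real.cosh_sq_sub_sinh_sq r₁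
  have e2 : k₂ ^ 2 - s₂ ^ 2 = 1 := Real.cosh_sq_sub_sinh_sq r₂
  clear_value s₀ s₁ s₂ k₀ k₁ k₂
  have l0 := Real.one_le_cosh (2*r₀)
  have l1 := Real.one_le_cosh (2*r₁)
  have l2 := Real.one_le_cosh (2*r₂)
  have hdpos : 0 < d := by nlinarith
  have hdne : d ≠ 0 := ne_of_gt hdpos
  rw [Real.cosh_two_mul, Real.cosh_two_mul, Real.cosh_two_mul, ← hk0, ← hk1, ← hk2,
    ← hs0, ← hs1, ← hs2] at hd ha
  rw [Real.sinh_two_mul, Real.sinh_two_mul, Real.sinh_two_mul, ← hk0, ← hk1, ← hk2,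
    ← hs0, ← hs1, ← hs2] at hc
  have key1 : (a - 1) * d = 8 * s₀ ^ 2 * s₁ ^ 2 * s₂ ^ 2 := by
    rw [ha, hd]; field_simp
    linear_combination ((k₁^2 + s₁^2 - 1) * (k₂^2 + s₂^2 - 1)) * e0 +
      (2 * s₀^2 * (k₂^2 + s₂^2 - 1)) * e1 + (4 * s₀^2 * s₁^2) * e2
  have key2 : (a + 1) * d = 8 * k₀ ^ 2 * k₁ ^ 2 * k₂ ^ 2 := by
    rw [ha, hd]; field_simp
    linear_combination (-(k₁^2 + s₁^2 + 1) * (k₂^2 + s₂^2 + 1)) * e0 +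
      (-2 * k₀^2 * (k₂^2 + s₂^2 + 1)) * e1 + (-4 * k₀^2 * k₁^2) * e2
  have hap : 0 < a + 1 := by
    have h : a + 1 = 8 * k₀ ^ 2 * k₁ ^ 2 * k₂ ^ 2 / d := (eq_div_iff hdne).mpr key2
    rw [h]; exact div_pos (by positivity) hdpos
  have hane : a + 1 ≠ 0 := ne_of_gt hap
  have ham : 0 ≤ a - 1 := by
    have h : a - 1 = 8 * s₀ ^ 2 * s₁ ^ 2 * s₂ ^ 2 / d := (eq_div_iff hdne).mpr key1
    rw [h]; exact div_nonneg (by positivity) hdpos.le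
  have part1 : c ^ 2 = a ^ 2 - 1 := by
    have hcd : c * d = 8 * (s₀ * k₀) * (s₁ * k₁) * (s₂ * k₂) := by
      rw [hc]; field_simp; ring
    have h : (c ^ 2) * d ^ 2 = (a ^ 2 - 1) * d ^ 2 := by
      have hfac : a ^ 2 - 1 = (a - 1) * (a + 1) := by ring
      rw [hfac]
      calc c ^ 2 * d ^ 2 = (c * d) ^ 2 := by ring
        _ = ((a - 1) * d) * ((a + 1) * d) := by rw [hcd, key1, key2]; ring
        _ = (a - 1) * (a + 1) * d ^ 2 := by ring
    have hd2 : d ^ 2 ≠ 0 := pow_ne_zero _ hdne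
    exact mul_right_cancel₀ hd2 h
  have ht0 : Real.tanh r₀ = s₀ / k₀ := by
    rw [Real.tanh_eq_sinh_div_cosh, ← hs0, ← hk0]
  have ht1 : Real.tanh r₁ = s₁ / k₁ := by
    rw [Real.tanh_eq_sinh_div_cosh, ← hs1, ← hk1]
  have ht2 : Real.tanh r₂ = s₂ / k₂ := by
    rw [Real.tanh_eq_sinh_div_cosh, ← hs2, ← hk2]
  have part2 : (a - 1) / (a + 1) =
      (Real.tanh r₀) ^ 2 * (Real.tanh r₁) ^ 2 * (Real.tanh r₂) ^ 2 := by
    rw [ht0, ht1, ht2,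
      show (s₀/k₀)^2 * (s₁/k₁)^2 * (s₂/k₂)^2
        = (s₀^2 * s₁^2 * s₂^2) / (k₀^2 * k₁^2 * k₂^2) from by ring,
      div_eq_div_iff hane (by positivity)]
    linear_combination ((a + 1) / 8) * key1 - ((a - 1) / 8) * key2
  refine ⟨part1, part2, ?_⟩
  have hs0n : 0 ≤ s₀ := hs0 ▸ Real.sinh_nonneg_iff.mpr h0
  have hs1n : 0 ≤ s₁ := hs1 ▸ Real.sinh_nonneg_iff.mpr h1
  have hs2n : 0 ≤ s₂ := hs2 ▸ Real.sinh_nonneg_iff.mpr h2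
  have htn : 0 ≤ Real.tanh r₀ * Real.tanh r₁ * Real.tanh r₂ := by
    rw [ht0, ht1, ht2]; positivity
  rw [part2]
  have hsq : (Real.tanh r₀) ^ 2 * (Real.tanh r₁) ^ 2 * (Real.tanh r₂) ^ 2 =
      (Real.tanh r₀ * Real.tanh r₁ * Real.tanh r₂) ^ 2 := by ring
  rw [hsq, Real.sqrt_sq htn]
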